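/- Let p be prime, k | p-1, k ≠ 1, and A_k the subgroup of k-th powers in Z_p^* with |A_k| = t. Suppose A_k = S₁ + ... + Sₙ where each Sᵢ ⊆ Z_p has cardinality exactly 2 and the sum is direct (|A_k| = 2^n = t). Then there exists c ∈ Z_p with c ≠ 0 such that the representation function r(c) = #{(x,y) ∈ A_k × A_k : x + y = c} satisfies r(c) ≥ t/2. -/

import Mathlib

open Finset Pointwise

theorem stmt6 (p k : ℕ) [Fact p.Prime] (hk : k ∣ p - 1) (hk1 : k ≠ 1)
    (A : Finset (ZMod p))
    (hA : A = Finset.image (fun y : (ZMod p)ˣ => ((y : ZMod p)) ^ k) Finset.univ)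
    (n : ℕ) (S : Fin n → Finset (ZMod p)) (hcard : ∀ i, (S i).card = 2)
    (hsum : A = ∑ i, S i) (hdirect : A.card = 2 ^ n) :
    ∃ c : ZMod p, c ≠ 0 ∧
      A.card ≤ 2 * ((A ×ˢ A).filter (fun q => q.1 + q.2 = c)).card := by
  classical
  have hp : p.Prime := Fact.out
  have hp2 : p ≠ 2 := by
    rintro rfl
    exact hk1 (Nat.dvd_one.mp hk)
  have hmemA : ∀ x : ZMod p, x ∈ A ↔ ∃ y : (ZMod p)ˣ, ((y : ZMod p)) ^ k = x := by
    intro x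
    simp [hA, Finset.mem_image]
  have h1A : (1 : ZMod p) ∈ A := (hmemA 1).mpr ⟨1, by simp⟩
  cases n with
  | zero =>
    -- A = {1}
    have hA1 : A = {1} := by
      apply Finset.eq_singleton_iff_unique_mem.mpr
      refine ⟨h1A, fun x hx => ?_⟩
      have h1 : A.card = 1 := by simpa using hdirect
      obtain ⟨a, ha⟩ := Finset.card_eq_one.mp h1
      rw [ha] at hx h1A
      simp only [Finset.mem_singleton] at hx h1A
      rw [hx, h1A]
    have h2 : (2 : ZMod p) ≠ 0 := by
      intro h
      have hd : (p : ℕ) ∣ 2 :=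
        (ZMod.natCast_eq_zero_iff 2 p).mp (by exact_mod_cast h)
      exact hp2 ((Nat.prime_dvd_prime_iff_eq hp Nat.prime_two).mp hd)
    refine ⟨2, h2, ?_⟩
    have hmem : ((1 : ZMod p), (1 : ZMod p)) ∈
        (A ×ˢ A).filter (fun q => q.1 + q.2 = (2 : ZMod p)) := by
      simp [Finset.mem_filter, Finset.mem_product, h1A, one_add_one_eq_two]
    have := Finset.card_pos.mpr ⟨_, hmem⟩
    simp only [pow_zero, hdirect]
    omega
  | succ m =>
    -- -1 ∈ A
    have hm1 : (-1 : ZMod p) ∈ A := by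
      set f : (ZMod p)ˣ →* (ZMod p)ˣ := powMonoidHom k with hf
      set H : Subgroup (ZMod p)ˣ := f.range with hH
      set T : Finset (ZMod p)ˣ := Finset.univ.image (fun y => y ^ k) with hT
      have hHT : ∀ x, x ∈ H ↔ x ∈ T := by
        intro x
        simp [hH, hT, hf, MonoidHom.mem_range, powMonoidHom_apply, Finset.mem_image]
      have hcardH : Fintype.card H = 2 ^ (m + 1) := by
        have e : Fintype.card H = Fintype.card {x // x ∈ T} :=
          Fintype.card_congr (Equiv.subtypeEquivRight hHT)
        rw [e, Fintype.card_coe]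
        have hAT : A = T.image (fun u : (ZMod p)ˣ => (u : ZMod p)) := by
          ext x
          simp [hA, hT, Finset.mem_image, Units.val_pow_eq_pow_val]
        have : A.card = T.card := by
          rw [hAT, Finset.card_image_of_injective _ Units.val_injective]
        omega
      have h2 : (2 : ℕ) ∣ Fintype.card H := by
        rw [hcardH]; exact dvd_pow_self 2 (Nat.succ_ne_zero m)
      obtain ⟨u, hu⟩ := exists_prime_orderOf_dvd_card 2 h2
      have hu2 : (u : (ZMod p)ˣ) ^ 2 = 1 := by
        have := pow_orderOf_eq_one u
        rw [hu] at this
        exact_mod_cast congrArg (Subtype.val) this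
      have hu1 : (u : (ZMod p)ˣ) ≠ 1 := by
        intro h
        have h1 : u = 1 := OneMemClass.coe_eq_one.mp h
        rw [h1, orderOf_one] at hu
        exact (by norm_num : (1 : ℕ) ≠ 2) hu
      have hv2 : ((u : (ZMod p)ˣ) : ZMod p) ^ 2 = 1 := by
        rw [← Units.val_pow_eq_pow_val, hu2, Units.val_one]
      have hv1 : ((u : (ZMod p)ˣ) : ZMod p) ≠ 1 := by
        intro h
        exact hu1 (Units.ext h)
      have hvneg : ((u : (ZMod p)ˣ) : ZMod p) = -1 := by
        set v := ((u : (ZMod p)ˣ) : ZMod p)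
        have : (v - 1) * (v + 1) = 0 := by linear_combination hv2
        rcases mul_eq_zero.mp this with h | h
        · exact absurd (by linear_combination h) hv1
        · linear_combination h
      obtain ⟨y, hy⟩ := MonoidHom.mem_range.mp u.2
      refine (hmemA _).mpr ⟨y, ?_⟩
      have : ((y ^ k : (ZMod p)ˣ) : ZMod p) = -1 := by
        rw [show y ^ k = f y from rfl, hy, hvneg]
      simpa [Units.val_pow_eq_pow_val] using this
    have hneg : ∀ x ∈ A, -x ∈ A := by
      intro x hx
      obtain ⟨z, hz⟩ := (hmemA x).mp hx
      obtain ⟨y, hy⟩ := (hmemA (-1)).mp hm1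
      refine (hmemA (-x)).mpr ⟨y * z, ?_⟩
      rw [Units.val_mul, mul_pow, hy, hz]
      ring
    obtain ⟨s, s', hne, hS0⟩ := Finset.card_eq_two.mp (hcard 0)
    set B : Finset (ZMod p) := ∑ i : Fin m, S i.succ with hB
    have hAB : A = ({s, s'} : Finset (ZMod p)) + B := by
      rw [hsum, Fin.sum_univ_succ, hS0]
    have hBcard : 2 ^ m ≤ B.card := by
      have h1 : A.card ≤ ({s, s'} : Finset (ZMod p)).card * B.card := by
        rw [hAB]; exact Finset.card_add_le
      rw [Finset.card_pair hne, hdirect, pow_succ] at h1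
      omega
    refine ⟨s - s', sub_ne_zero_of_ne hne, ?_⟩
    have hmaps : ∀ u ∈ B, (s + u, (s - s') - (s + u)) ∈
        (A ×ˢ A).filter (fun q => q.1 + q.2 = s - s') := by
      intro u hu
      have h1 : s + u ∈ A := by
        rw [hAB]; exact Finset.add_mem_add (Finset.mem_insert_self _ _) hu
      have h2 : s' + u ∈ A := by
        rw [hAB]
        exact Finset.add_mem_add (by simp) hu
      have h3 : -(s' + u) ∈ A := hneg _ h2
      have h4 : (s - s') - (s + u) = -(s' + u) := by ring
      rw [Finset.mem_filter, Finset.mem_product]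
      refine ⟨⟨h1, h4 ▸ h3⟩, by dsimp; ring⟩
    have hinj : B.card ≤
        ((A ×ˢ A).filter (fun q => q.1 + q.2 = s - s')).card := by
      apply Finset.card_le_card_of_injOn (fun u => (s + u, (s - s') - (s + u))) hmaps
      intro a _ b _ h
      have := congrArg Prod.fst h
      simpa using this
    calc A.card = 2 * 2 ^ m := by rw [hdirect, pow_succ]; ring
      _ ≤ 2 * B.card := Nat.mul_le_mul_left _ hBcard
      _ ≤ _ := Nat.mul_le_mul_left _ hinj
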